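/- arXiv:2105.12081 — 4 statements merged into one kernel-verified Lean document; each statement's English description precedes it below -/
import Mathlib

section
/- Let c > 0, λ₀ ≥ 0, λ₂ ≥ 0, and β̂ ∈ ℝ^m. Then the function G(ξ) = (c/2)‖ξ − β̂‖₂² + λ₀·1(ξ ≠ 0) + λ₂‖ξ‖₂² is minimized over ξ ∈ ℝ^m by ξ* = (c/(c+2λ₂))·β̂ if (c/(c+2λ₂))‖β̂‖₂ ≥ √(2λ₀/(c+2λ₂)), and by ξ* = 0 otherwise. -/
open Classical in

/-- The function G(ξ) = (c/2)‖ξ − β̂‖² + λ₀·1(ξ ≠ 0) + λ₂‖ξ‖² is minimized at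
    ξ* = (c/(c+2λ₂))·β̂ if (c/(c+2λ₂))‖β̂‖ ≥ √(2λ₀/(c+2λ₂)), and at ξ* = 0 otherwise. -/
theorem l0_ridge_threshold_minimizer {m : ℕ} (c lam0 lam2 : ℝ)
    (hc : 0 < c) (hlam0 : 0 ≤ lam0) (hlam2 : 0 ≤ lam2)
    (b : EuclideanSpace ℝ (Fin m)) :
    let G : EuclideanSpace ℝ (Fin m) → ℝ := fun ξ =>
      c / 2 * ‖ξ - b‖ ^ 2 + (if ξ ≠ 0 then lam0 else 0) + lam2 * ‖ξ‖ ^ 2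
    let ξstar : EuclideanSpace ℝ (Fin m) :=
      if c / (c + 2 * lam2) * ‖b‖ ≥ Real.sqrt (2 * lam0 / (c + 2 * lam2)) then
        (c / (c + 2 * lam2)) • b else 0
    ∀ ξ : EuclideanSpace ℝ (Fin m), G ξstar ≤ G ξ := by
  intro G ξstar ξ
  have ha : 0 < c + 2 * lam2 := by positivity
  have ha0 : c + 2 * lam2 ≠ 0 := ne_of_gt ha
  set v : EuclideanSpace ℝ (Fin m) := (c / (c + 2 * lam2)) • b with hv
  have hca : 0 ≤ c / (c + 2 * lam2) := by positivity
  have hnv : ‖v‖ = c / (c + 2 * lam2) * ‖b‖ := by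
    rw [hv, norm_smul, Real.norm_eq_abs, abs_of_nonneg hca]
  have hq : 0 ≤ 2 * lam0 / (c + 2 * lam2) := by positivity
  have key : ∀ x : EuclideanSpace ℝ (Fin m),
      c / 2 * ‖x - b‖ ^ 2 + lam2 * ‖x‖ ^ 2
        = (c + 2 * lam2) / 2 * ‖x - v‖ ^ 2
          + (c / 2 * ‖b‖ ^ 2 - c ^ 2 / (2 * (c + 2 * lam2)) * ‖b‖ ^ 2) := by
    intro x
    have h1 : ‖x - b‖ ^ 2 = ‖x‖ ^ 2 - 2 * inner ℝ x b + ‖b‖ ^ 2 := norm_sub_sq_real x b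
    have h2 : ‖x - v‖ ^ 2
        = ‖x‖ ^ 2 - 2 * (c / (c + 2 * lam2) * inner ℝ x b)
          + (c / (c + 2 * lam2)) ^ 2 * ‖b‖ ^ 2 := by
      rw [norm_sub_sq_real x v, hv, real_inner_smul_right, norm_smul,
        Real.norm_eq_abs, mul_pow, sq_abs]
    rw [h1, h2]; field_simp; ring
  set K : ℝ := c / 2 * ‖b‖ ^ 2 - c ^ 2 / (2 * (c + 2 * lam2)) * ‖b‖ ^ 2 with hK
  have keyv := key v
  have keyξ := key ξ
  have key0 := key 0
  simp only [sub_self, norm_zero] at keyv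
  simp only [zero_sub, norm_neg, norm_zero] at key0
  simp only [G, ξstar]
  by_cases hcond : c / (c + 2 * lam2) * ‖b‖ ≥ Real.sqrt (2 * lam0 / (c + 2 * lam2))
  · rw [if_pos hcond, ← hv]
    have hindv : (if v ≠ 0 then lam0 else 0) ≤ lam0 := by
      split <;> simp [hlam0]
    by_cases hx : ξ ≠ 0
    · rw [if_pos hx]
      have h1 : 0 ≤ (c + 2 * lam2) / 2 * ‖ξ - v‖ ^ 2 := by positivity
      linarith
    · push_neg at hx
      subst hx
      simp only [ne_eq, not_true_eq_false, if_false, zero_sub, norm_neg,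
        norm_zero] at keyξ ⊢
      by_cases hv0 : v = 0
      · rw [if_neg (fun h => h hv0), hv0]
        simp only [zero_sub, norm_neg, norm_zero] at keyv ⊢
        linarith
      · rw [if_pos hv0]
        have hs : Real.sqrt (2 * lam0 / (c + 2 * lam2)) ≤ ‖v‖ := by
          rw [hnv]; exact hcond
        have hs2 : 2 * lam0 / (c + 2 * lam2) ≤ ‖v‖ ^ 2 := by
          have := Real.sq_sqrt hq
          nlinarith [Real.sqrt_nonneg (2 * lam0 / (c + 2 * lam2))]
        have hl : lam0 ≤ (c + 2 * lam2) / 2 * ‖v‖ ^ 2 := by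
          rw [div_le_iff₀ ha] at hs2
          linarith
        linarith
  · rw [if_neg hcond]
    push_neg at hcond
    have hs : ‖v‖ < Real.sqrt (2 * lam0 / (c + 2 * lam2)) := by rw [hnv]; exact hcond
    have hs2 : ‖v‖ ^ 2 ≤ 2 * lam0 / (c + 2 * lam2) := by
      have := Real.sq_sqrt hq
      nlinarith [norm_nonneg v]
    have hl : (c + 2 * lam2) / 2 * ‖v‖ ^ 2 ≤ lam0 := by
      rw [le_div_iff₀ ha] at hs2
      linarith
    by_cases hx : ξ ≠ 0
    · rw [if_pos hx, if_neg (fun h => h rfl)]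
      have h1 : 0 ≤ (c + 2 * lam2) / 2 * ‖ξ - v‖ ^ 2 := by positivity
      simp only [zero_sub, norm_neg, norm_zero]
      linarith
    · push_neg at hx
      subst hx
      simp
end

section
/- Let c > 0, λ₀ ≥ 0, λ₁ ≥ 0, λ₂ ≥ 0, and β̂ ∈ ℝ^m with β̂ ≠ 0. Define φ = (c/(c+2λ₂))·(1 − λ₁/(c‖β̂‖₂))₊. Then the function G(ξ) = (c/2)‖ξ − β̂‖₂² + λ₀·1(ξ ≠ 0) + λ₁‖ξ‖₂ + λ₂‖ξ‖₂² is minimized over ξ ∈ ℝ^m by ξ* = φ·β̂ if φ‖β̂‖₂ ≥ √(2λ₀/(c+2λ₂)) and ξ* = 0 otherwise, provided that either λ₀ = 0 or λ₁ = 0 or λ₂ = 0 as required to make the two thresholding rules consistent; in particular, when λ₁ = 0 the claimed minimizer holds for all λ₀, λ₂ ≥ 0. -/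
open Classical

set_option maxHeartbeats 1600000 in
private lemma scalar_key (c l0 l1 l2 B r : ℝ)
    (hc : 0 < c) (h0 : 0 ≤ l0) (h1 : 0 ≤ l1) (h2 : 0 ≤ l2) (hB : 0 < B) (hr : 0 ≤ r) :
    (if (c / (c + 2 * l2) * max (1 - l1 / (c * B)) 0) * B ≥
        Real.sqrt (2 * l0 / (c + 2 * l2)) then
      c / 2 * ((c / (c + 2 * l2) * max (1 - l1 / (c * B)) 0) * B - B) ^ 2
        + (if (c / (c + 2 * l2) * max (1 - l1 / (c * B)) 0) ≠ 0 then l0 else 0)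
        + l1 * ((c / (c + 2 * l2) * max (1 - l1 / (c * B)) 0) * B)
        + l2 * ((c / (c + 2 * l2) * max (1 - l1 / (c * B)) 0) * B) ^ 2
    else c / 2 * B ^ 2)
    ≤ c / 2 * (r - B) ^ 2 + (if r ≠ 0 then l0 else 0) + l1 * r + l2 * r ^ 2 := by
  have hD : 0 < c + 2 * l2 := by linarith
  have hcB : 0 < c * B := mul_pos hc hB
  have hind : (0:ℝ) ≤ (if r ≠ 0 then l0 else 0) := by split_ifs <;> simp [h0]
  by_cases hcase : c * B ≤ l1
  · have hm : max (1 - l1 / (c * B)) 0 = 0 := by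
      apply max_eq_right
      have : 1 ≤ l1 / (c * B) := (one_le_div hcB).2 hcase
      linarith
    rw [hm]
    simp only [mul_zero, zero_mul, ne_eq, not_true_eq_false, if_false,
      zero_sub, mul_one, not_false_eq_true]
    split_ifs with hcond <;>
      nlinarith [mul_nonneg hr (sub_nonneg.2 hcase), mul_nonneg hc.le (sq_nonneg r), hind]
  · push_neg at hcase
    have hfrac : l1 / (c * B) < 1 := (div_lt_one hcB).2 hcase
    have hm : max (1 - l1 / (c * B)) 0 = 1 - l1 / (c * B) := by
      apply max_eq_left; linarith
    rw [hm]
    obtain ⟨t, htdef⟩ : ∃ t : ℝ, c / (c + 2 * l2) * (1 - l1 / (c * B)) * B = t := ⟨_, rfl⟩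
    rw [htdef]
    have htpos : 0 < t := by
      rw [← htdef]
      exact mul_pos (mul_pos (div_pos hc hD) (by linarith)) hB
    have hl1 : l1 = c * B - (c + 2 * l2) * t := by
      rw [← htdef]; field_simp; ring
    have hphine : c / (c + 2 * l2) * (1 - l1 / (c * B)) ≠ 0 :=
      ne_of_gt (mul_pos (div_pos hc hD) (by linarith))
    have hhint : (0:ℝ) ≤ (c / 2 + l2) * (r - t) ^ 2 :=
      mul_nonneg (by linarith) (sq_nonneg _)
    by_cases hge : t ≥ Real.sqrt (2 * l0 / (c + 2 * l2))
    · rw [if_pos hge, if_pos hphine]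
      have hx : Real.sqrt (2 * l0 / (c + 2 * l2)) ^ 2 = 2 * l0 / (c + 2 * l2) :=
        Real.sq_sqrt (by positivity)
      have h2' : 2 * l0 / (c + 2 * l2) ≤ t ^ 2 := by
        nlinarith [Real.sqrt_nonneg (2 * l0 / (c + 2 * l2))]
      have hsq : 2 * l0 ≤ (c + 2 * l2) * t ^ 2 := by
        have := (div_le_iff₀ hD).1 h2'
        linarith
      by_cases hr0 : r = 0
      · rw [if_neg (not_not_intro hr0), hl1]
        nlinarith [hsq, hr0, sq_nonneg t]
      · rw [if_pos hr0, hl1]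
        nlinarith [hhint]
    · rw [if_neg hge]
      push_neg at hge
      have hx : Real.sqrt (2 * l0 / (c + 2 * l2)) ^ 2 = 2 * l0 / (c + 2 * l2) :=
        Real.sq_sqrt (by positivity)
      have h2' : t ^ 2 < 2 * l0 / (c + 2 * l2) := by
        have h := mul_self_lt_mul_self htpos.le hge
        calc t ^ 2 = t * t := sq t
          _ < _ * _ := h
          _ = Real.sqrt (2 * l0 / (c + 2 * l2)) ^ 2 := (sq _).symm
          _ = 2 * l0 / (c + 2 * l2) := hx
      have hsq : (c + 2 * l2) * t ^ 2 < 2 * l0 := by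
        have := (lt_div_iff₀ hD).1 h2'
        linarith
      by_cases hr0 : r = 0
      · rw [if_neg (not_not_intro hr0)]
        nlinarith [hr0, sq_nonneg (r - B)]
      · rw [if_pos hr0, hl1]
        nlinarith [hhint, hsq]

open Classical in

/-- Combined thresholding operator for group subset selection with group lasso or
    ridge shrinkage (Proposition 2): with φ = (c/(c+2λ₂))·(1 − λ₁/(c‖β̂‖))₊, the function
    G(ξ) = (c/2)‖ξ − β̂‖² + λ₀·1(ξ ≠ 0) + λ₁‖ξ‖ + λ₂‖ξ‖² is minimized at ξ* = φ·β̂ if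
    φ‖β̂‖ ≥ √(2λ₀/(c+2λ₂)) and ξ* = 0 otherwise, provided λ₀ = 0 or λ₁ = 0 or λ₂ = 0. -/
theorem combined_threshold_minimizer {m : ℕ} (c lam0 lam1 lam2 : ℝ)
    (hc : 0 < c) (hlam0 : 0 ≤ lam0) (hlam1 : 0 ≤ lam1) (hlam2 : 0 ≤ lam2)
    (hcompat : lam0 = 0 ∨ lam1 = 0 ∨ lam2 = 0)
    (b : EuclideanSpace ℝ (Fin m)) (hb : b ≠ 0) :
    let φ : ℝ := c / (c + 2 * lam2) * max (1 - lam1 / (c * ‖b‖)) 0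
    let G : EuclideanSpace ℝ (Fin m) → ℝ := fun ξ =>
      c / 2 * ‖ξ - b‖ ^ 2 + (if ξ ≠ 0 then lam0 else 0) + lam1 * ‖ξ‖ + lam2 * ‖ξ‖ ^ 2
    let ξstar : EuclideanSpace ℝ (Fin m) :=
      if φ * ‖b‖ ≥ Real.sqrt (2 * lam0 / (c + 2 * lam2)) then φ • b else 0
    ∀ ξ : EuclideanSpace ℝ (Fin m), G ξstar ≤ G ξ := by
  intro φ G ξstar ξ
  have hB : 0 < ‖b‖ := norm_pos_iff.2 hb
  have hD : 0 < c + 2 * lam2 := by linarith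
  have hφdef : φ = c / (c + 2 * lam2) * max (1 - lam1 / (c * ‖b‖)) 0 := rfl
  have hφ0 : 0 ≤ φ := by
    rw [hφdef]
    exact mul_nonneg (by positivity) (le_max_right _ 0)
  have key := scalar_key c lam0 lam1 lam2 ‖b‖ ‖ξ‖ hc hlam0 hlam1 hlam2 hB (norm_nonneg ξ)
  rw [← hφdef] at key
  have hGξ : c / 2 * (‖ξ‖ - ‖b‖) ^ 2 + (if ‖ξ‖ ≠ 0 then lam0 else 0) + lam1 * ‖ξ‖
      + lam2 * ‖ξ‖ ^ 2 ≤ G ξ := by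
    show _ ≤ c / 2 * ‖ξ - b‖ ^ 2 + (if ξ ≠ 0 then lam0 else 0) + lam1 * ‖ξ‖
      + lam2 * ‖ξ‖ ^ 2
    have h2 : (if ξ ≠ 0 then lam0 else 0) = (if ‖ξ‖ ≠ 0 then lam0 else 0) := by
      simp [norm_eq_zero]
    rw [h2]
    have h1 : (‖ξ‖ - ‖b‖) ^ 2 ≤ ‖ξ - b‖ ^ 2 := by
      have h := abs_norm_sub_norm_le ξ b
      nlinarith [abs_nonneg (‖ξ‖ - ‖b‖), sq_abs (‖ξ‖ - ‖b‖)]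
    have := mul_le_mul_of_nonneg_left h1 (by linarith : (0:ℝ) ≤ c / 2)
    linarith
  by_cases hcond : φ * ‖b‖ ≥ Real.sqrt (2 * lam0 / (c + 2 * lam2))
  · have hξstar : ξstar = φ • b := if_pos hcond
    rw [if_pos hcond] at key
    have hnorm : ‖φ • b‖ = φ * ‖b‖ := by
      rw [norm_smul, Real.norm_eq_abs, abs_of_nonneg hφ0]
    have hnormsub : ‖φ • b - b‖ ^ 2 = (φ * ‖b‖ - ‖b‖) ^ 2 := by
      have h : φ • b - b = (φ - 1) • b := by rw [sub_smul, one_smul]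
      rw [h, norm_smul, Real.norm_eq_abs, mul_pow, sq_abs]
      ring
    have hind : (if φ • b ≠ 0 then lam0 else 0) = (if φ ≠ 0 then lam0 else 0) := by
      simp [smul_eq_zero, hb]
    have hGstar : G ξstar = c / 2 * (φ * ‖b‖ - ‖b‖) ^ 2 + (if φ ≠ 0 then lam0 else 0)
        + lam1 * (φ * ‖b‖) + lam2 * (φ * ‖b‖) ^ 2 := by
      show c / 2 * ‖ξstar - b‖ ^ 2 + (if ξstar ≠ 0 then lam0 else 0) + lam1 * ‖ξstar‖
        + lam2 * ‖ξstar‖ ^ 2 = _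
      rw [hξstar, hnorm, hnormsub, hind]
    rw [hGstar]
    exact le_trans key hGξ
  · have hξstar : ξstar = 0 := if_neg hcond
    rw [if_neg hcond] at key
    have hGstar : G ξstar = c / 2 * ‖b‖ ^ 2 := by
      show c / 2 * ‖ξstar - b‖ ^ 2 + (if ξstar ≠ 0 then lam0 else 0) + lam1 * ‖ξstar‖
        + lam2 * ‖ξstar‖ ^ 2 = _
      rw [hξstar]
      simp
    rw [hGstar]
    exact le_trans key hGξ
end

section
/- Let F = L + Ω where Ω(β) = Σ_{k=1}^g [λ₀k·1(‖β_k‖₂ ≠ 0) + λ₁k‖β_k‖₂ + λ₂k‖β_k‖₂²] with λ₀k > 0, and let c̄_k > c_k for all k. Suppose a sequence of iterates {β^(m)} satisfies F(β^(m)) − F(β^(m+1)) ≥ Σ_k ((c̄_k − c_k)/2)‖β_k^(m+1) − β_k^(m)‖₂², and whenever block k changes between zero and nonzero at step m the updated nonzero block satisfies ‖β_k^(m+1)‖₂ ≥ √(2λ₀k/(c̄_k + 2λ₂k)) (or the removed block satisfied this bound). If F is bounded below, then the support {k : β_k^(m) ≠ 0} changes only finitely many times. -/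
open Classical

/-- Support stabilization (Lemma 4): under the per-update decrease inequality and the
    thresholding lower bound on any block entering or leaving the support, if F = L + Ω is
    bounded below then the support {k : β_k^(m) ≠ 0} changes only finitely many times. -/
theorem support_stabilizes {g : ℕ} {V : Type*}
    [NormedAddCommGroup V] [InnerProductSpace ℝ V]
    (L : (Fin g → V) → ℝ)
    (lam0 lam1 lam2 c cb : Fin g → ℝ)
    (hlam0 : ∀ k, 0 < lam0 k) (hlam1 : ∀ k, 0 ≤ lam1 k) (hlam2 : ∀ k, 0 ≤ lam2 k)
    (hc : ∀ k, 0 ≤ c k) (hcb : ∀ k, c k < cb k)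
    (F : (Fin g → V) → ℝ)
    (hF : F = fun β => L β + ∑ k, ((if β k ≠ 0 then lam0 k else 0)
      + lam1 k * ‖β k‖ + lam2 k * ‖β k‖ ^ 2))
    (β : ℕ → Fin g → V)
    (hdecr : ∀ m, F (β m) - F (β (m + 1)) ≥
      ∑ k, (cb k - c k) / 2 * ‖β (m + 1) k - β m k‖ ^ 2)
    (hthresh_in : ∀ m k, β m k = 0 → β (m + 1) k ≠ 0 →
      ‖β (m + 1) k‖ ≥ Real.sqrt (2 * lam0 k / (cb k + 2 * lam2 k)))
    (hthresh_out : ∀ m k, β m k ≠ 0 → β (m + 1) k = 0 →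
      ‖β m k‖ ≥ Real.sqrt (2 * lam0 k / (cb k + 2 * lam2 k)))
    (hbdd : ∃ B : ℝ, ∀ x, B ≤ F x) :
    ∃ M : ℕ, ∀ m ≥ M, ∀ k, (β m k ≠ 0 ↔ β M k ≠ 0) := by
  -- handle g = 0 trivially
  rcases Nat.eq_zero_or_pos g with hg | hg
  · subst hg
    exact ⟨0, fun m _ k => k.elim0⟩
  haveI : Nonempty (Fin g) := ⟨⟨0, hg⟩⟩
  obtain ⟨B, hB⟩ := hbdd
  -- per-block quantity
  set q : Fin g → ℝ := fun k => 2 * lam0 k / (cb k + 2 * lam2 k) with hq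
  have hden : ∀ k, 0 < cb k + 2 * lam2 k := fun k =>
    by have := (hc k).trans_lt (hcb k); have := hlam2 k; linarith
  have hqpos : ∀ k, 0 < q k := fun k =>
    div_pos (by have := hlam0 k; linarith) (hden k)
  set δ : ℝ := Finset.univ.inf' Finset.univ_nonempty
    (fun k => (cb k - c k) / 2 * q k) with hδ
  have hδpos : 0 < δ := by
    rw [hδ]
    apply Finset.lt_inf'_iff _ |>.mpr
    intro k _
    have := hcb k
    exact mul_pos (by linarith) (hqpos k)
  -- each term of the sum nonneg
  have hterm : ∀ m k, 0 ≤ (cb k - c k) / 2 * ‖β (m + 1) k - β m k‖ ^ 2 := by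
    intro m k
    have h := hcb k
    have h1 : (0:ℝ) ≤ (cb k - c k) / 2 := by linarith
    exact mul_nonneg h1 (sq_nonneg _)
  have hsumnn : ∀ m, 0 ≤ ∑ k, (cb k - c k) / 2 * ‖β (m + 1) k - β m k‖ ^ 2 :=
    fun m => Finset.sum_nonneg fun k _ => hterm m k
  -- monotone decrease
  have hmono : ∀ i j, i ≤ j → F (β j) ≤ F (β i) := by
    intro i j hij
    induction j with
    | zero => simp_all
    | succ n ih =>
      rcases Nat.lt_or_ge i (n + 1) with h | h
      · have := ih (by omega)
        have := hdecr n
        have := hsumnn n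
        linarith
      · have : i = n + 1 := by omega
        subst this; rfl
  -- a support change at step m forces a drop of at least δ
  have hdrop : ∀ m, (∃ k, ¬(β m k ≠ 0 ↔ β (m + 1) k ≠ 0)) →
      F (β (m + 1)) ≤ F (β m) - δ := by
    intro m ⟨k, hk⟩
    have hnorm : Real.sqrt (q k) ≤ ‖β (m + 1) k - β m k‖ := by
      by_cases h0 : β m k = 0
      · have h1 : β (m + 1) k ≠ 0 := by tauto
        have := hthresh_in m k h0 h1
        rw [h0, sub_zero]; exact this
      · have h1 : β (m + 1) k = 0 := by tauto
        have := hthresh_out m k h0 h1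
        rw [h1, zero_sub, norm_neg]; exact this
    have hsq : q k ≤ ‖β (m + 1) k - β m k‖ ^ 2 := by
      have h := mul_self_le_mul_self (Real.sqrt_nonneg _) hnorm
      rw [Real.mul_self_sqrt (hqpos k).le] at h
      nlinarith [norm_nonneg (β (m + 1) k - β m k)]
    have hkterm : δ ≤ (cb k - c k) / 2 * ‖β (m + 1) k - β m k‖ ^ 2 := by
      have h1 : δ ≤ (cb k - c k) / 2 * q k :=
        Finset.inf'_le _ (Finset.mem_univ k)
      have h2 : (cb k - c k) / 2 * q k ≤ (cb k - c k) / 2 * ‖β (m + 1) k - β m k‖ ^ 2 := by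
        apply mul_le_mul_of_nonneg_left hsq
        have := hcb k; linarith
      linarith
    have hsum : (cb k - c k) / 2 * ‖β (m + 1) k - β m k‖ ^ 2 ≤
        ∑ j, (cb j - c j) / 2 * ‖β (m + 1) j - β m j‖ ^ 2 :=
      Finset.single_le_sum (fun j _ => hterm m j) (Finset.mem_univ k)
    have := hdecr m
    linarith
  -- suppose change steps are unbounded; derive contradiction
  by_contra hcon
  have hch : ∀ M : ℕ, ∃ m, M ≤ m ∧ ∃ k, ¬(β m k ≠ 0 ↔ β (m + 1) k ≠ 0) := by
    intro M
    by_contra hnone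
    simp only [not_exists, not_and, not_not, ne_eq] at hnone
    -- hnone : ∀ m, M ≤ m → ∀ k, (¬β m k = 0 ↔ ¬β (m+1) k = 0)
    apply hcon
    refine ⟨M, ?_⟩
    intro m hm
    induction m with
    | zero =>
      have : M = 0 := by omega
      subst this; intro j; rfl
    | succ n ih =>
      rcases Nat.lt_or_ge M (n + 1) with h | h
      · intro j
        have h1 := ih (by omega) j
        have h2 := hnone n (by omega) j
        simp only [ne_eq] at h1 ⊢
        exact h2.symm.trans h1
      · have : M = n + 1 := by omega
        subst this; intro j; rfl
  -- build a strictly increasing sequence of change steps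
  choose f hf1 hf2 using hch
  let a : ℕ → ℕ := fun n => Nat.rec (f 0) (fun _ prev => f (prev + 1)) n
  have ha0 : a 0 = f 0 := rfl
  have haS : ∀ n, a (n + 1) = f (a n + 1) := fun n => rfl
  have haC : ∀ n, ∃ k, ¬(β (a n) k ≠ 0 ↔ β (a n + 1) k ≠ 0) := by
    intro n
    cases n with
    | zero => exact hf2 0
    | succ n => rw [haS]; exact hf2 (a n + 1)
  have haMono : ∀ n, a n + 1 ≤ a (n + 1) := by
    intro n; rw [haS]; exact hf1 (a n + 1)
  -- cumulative drop
  have hcum : ∀ n, F (β (a n + 1)) ≤ F (β 0) - (n + 1 : ℕ) * δ := by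
    intro n
    induction n with
    | zero =>
      have h1 := hdrop (a 0) (haC 0)
      have h2 := hmono 0 (a 0) (Nat.zero_le _)
      push_cast
      linarith
    | succ n ih =>
      have h1 := hdrop (a (n + 1)) (haC (n + 1))
      have h2 := hmono (a n + 1) (a (n + 1)) (haMono n)
      push_cast at ih ⊢
      linarith
  -- contradiction with lower bound
  obtain ⟨n, hn⟩ := Archimedean.arch (F (β 0) - B) hδpos
  have h1 := hcum n
  have h2 := hB (β (a n + 1))
  have h3 : (n : ℝ) * δ ≤ (n + 1 : ℕ) * δ := by
    push_cast
    nlinarith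
  have : F (β 0) - B ≤ (n : ℝ) * δ := by
    simpa [nsmul_eq_mul] using hn
  push_cast at h1 h3
  linarith
end

section
/- Let f⁰ ∈ ℝ^n, y = f⁰ + ε, and suppose (β̂, {ν̂^(k)}) minimizes (1/n)‖y − Xβ‖₂² + 2Σ_k λ_k‖ν^(k)‖₂ over decompositions β = Σ_k ν^(k) with each ν^(k) supported on group G_k and at most s groups nonzero. If for all k, (1/n)‖X_k^⊤ε‖₂ ≤ λ_k, then for any feasible (β, {ν^(k)}): (1/n)‖f⁰ − Xβ̂‖₂² ≤ (1/n)‖f⁰ − Xβ‖₂² + 4Σ_k λ_k‖ν^(k)‖₂. -/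
open Matrix Classical

private lemma sqrt_sub_le_aux {p : ℕ} (u v : Fin p → ℝ) :
    Real.sqrt (∑ j, (u j - v j) ^ 2) ≤
      Real.sqrt (∑ j, u j ^ 2) + Real.sqrt (∑ j, v j ^ 2) := by
  have key : ∀ w : Fin p → ℝ,
      ‖(WithLp.equiv 2 (Fin p → ℝ)).symm w‖ = Real.sqrt (∑ j, w j ^ 2) := by
    intro w; rw [EuclideanSpace.norm_eq]; simp [sq_abs]
  have := norm_sub_le ((WithLp.equiv 2 (Fin p → ℝ)).symm u)
    ((WithLp.equiv 2 (Fin p → ℝ)).symm v)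
  rw [key u, key v] at this
  refine le_trans (le_of_eq ?_) this
  rw [EuclideanSpace.norm_eq]
  simp [sq_abs]

private lemma cs_aux {p : ℕ} (s : Finset (Fin p)) (f h : Fin p → ℝ) :
    ∑ j ∈ s, f j * h j ≤
      Real.sqrt (∑ j ∈ s, f j ^ 2) * Real.sqrt (∑ j ∈ s, h j ^ 2) := by
  have h1 := Finset.sum_mul_sq_le_sq_mul_sq s f h
  have h2 : ∑ j ∈ s, f j * h j ≤ |∑ j ∈ s, f j * h j| := le_abs_self _
  refine h2.trans ?_
  rw [← Real.sqrt_sq_eq_abs, ← Real.sqrt_mul (by positivity)]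
  exact Real.sqrt_le_sqrt h1

private lemma final_arith (nInv Qh Qb C E Th Tb SH SV : ℝ)
    (h1 : nInv * (Qh + 2 * C - 2 * Th + E) + 2 * SH
        ≤ nInv * (Qb + 2 * C - 2 * Tb + E) + 2 * SV)
    (h2 : nInv * (Th - Tb) ≤ SH + SV) :
    nInv * Qh ≤ nInv * Qb + 4 * SV := by nlinarith

/-- Deterministic core of the slow-rate oracle inequality (Theorem 4): if (β̂, ν̂) minimizes
    (1/n)‖y − Xβ‖² + 2Σ_k λ_k‖ν^(k)‖₂ over group-sparse latent decompositions, and the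
    group-wise empirical process terms satisfy (1/n)‖X_k^⊤ε‖₂ ≤ λ_k, then for any feasible
    (β, ν): (1/n)‖f⁰ − Xβ̂‖² ≤ (1/n)‖f⁰ − Xβ‖² + 4Σ_k λ_k‖ν^(k)‖₂. -/
theorem slow_rate_oracle_core {n p g : ℕ} (hn : 0 < n)
    (X : Matrix (Fin n) (Fin p) ℝ) (f0 ε y : Fin n → ℝ) (hy : y = f0 + ε)
    (G : Fin g → Finset (Fin p)) (lam : Fin g → ℝ) (hlam : ∀ k, 0 ≤ lam k)
    (s : ℕ)
    (Feasible : (Fin p → ℝ) → (Fin g → Fin p → ℝ) → Prop)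
    (hFeasible : Feasible = fun β ν =>
      (∀ j, β j = ∑ k, ν k j) ∧ (∀ k, ∀ j ∉ G k, ν k j = 0) ∧
      (Finset.univ.filter fun k => ν k ≠ 0).card ≤ s)
    (J : (Fin p → ℝ) → (Fin g → Fin p → ℝ) → ℝ)
    (hJ : J = fun β ν => (1 / n : ℝ) * ∑ i, (y i - (X.mulVec β) i) ^ 2
      + 2 * ∑ k, lam k * Real.sqrt (∑ j, ν k j ^ 2))
    (hnoise : ∀ k, (1 / n : ℝ) * Real.sqrt (∑ j ∈ G k, (∑ i, ε i * X i j) ^ 2) ≤ lam k)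
    (βhat : Fin p → ℝ) (νhat : Fin g → Fin p → ℝ)
    (hfeas_hat : Feasible βhat νhat)
    (hopt : ∀ β ν, Feasible β ν → J βhat νhat ≤ J β ν) :
    ∀ β ν, Feasible β ν →
      (1 / n : ℝ) * ∑ i, (f0 i - (X.mulVec βhat) i) ^ 2 ≤
        (1 / n : ℝ) * ∑ i, (f0 i - (X.mulVec β) i) ^ 2
          + 4 * ∑ k, lam k * Real.sqrt (∑ j, ν k j ^ 2) := by
  intro β ν hfeas
  have hopt' := hopt β ν hfeas
  subst hJ hFeasible hy
  obtain ⟨hsum, hsupp, -⟩ := hfeas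
  obtain ⟨hsumh, hsupph, -⟩ := hfeas_hat
  simp only at hopt'
  set A : Fin p → ℝ := fun j => ∑ i, ε i * X i j with hA
  -- expansion lemma
  have expand : ∀ b : Fin p → ℝ,
      ∑ i, ((f0 + ε) i - X.mulVec b i) ^ 2 =
        ∑ i, (f0 i - X.mulVec b i) ^ 2 + 2 * (∑ i, ε i * f0 i)
          - 2 * (∑ j, A j * b j) + ∑ i, ε i ^ 2 := by
    intro b
    have swap : ∑ i, ε i * X.mulVec b i = ∑ j, A j * b j := by
      simp only [Matrix.mulVec, dotProduct, Finset.mul_sum, hA, Finset.sum_mul]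
      rw [Finset.sum_comm]
      apply Finset.sum_congr rfl; intro j _
      apply Finset.sum_congr rfl; intro i _; ring
    have : ∀ i, ((f0 + ε) i - X.mulVec b i) ^ 2 =
        (f0 i - X.mulVec b i) ^ 2 + 2 * (ε i * f0 i) - 2 * (ε i * X.mulVec b i)
          + ε i ^ 2 := by
      intro i; simp only [Pi.add_apply]; ring
    rw [Finset.sum_congr rfl (fun i _ => this i)]
    simp only [Finset.sum_add_distrib, Finset.sum_sub_distrib, ← Finset.mul_sum, swap]
  rw [expand βhat, expand β] at hopt'
  set Nh : Fin g → ℝ := fun k => Real.sqrt (∑ j, νhat k j ^ 2) with hNh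
  set Nv : Fin g → ℝ := fun k => Real.sqrt (∑ j, ν k j ^ 2) with hNv
  -- key bound on the cross term
  have key : ∑ j, A j * βhat j - ∑ j, A j * β j ≤
      (n : ℝ) * ∑ k, lam k * (Nh k + Nv k) := by
    have step1 : ∑ j, A j * βhat j - ∑ j, A j * β j
        = ∑ k, ∑ j ∈ G k, A j * (νhat k j - ν k j) := by
      rw [← Finset.sum_sub_distrib]
      have : ∀ j, A j * βhat j - A j * β j = ∑ k, A j * (νhat k j - ν k j) := by
        intro j
        rw [hsum j, hsumh j, Finset.mul_sum, Finset.mul_sum, ← Finset.sum_sub_distrib]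
        apply Finset.sum_congr rfl; intro k _; ring
      rw [Finset.sum_congr rfl (fun j _ => this j), Finset.sum_comm]
      apply Finset.sum_congr rfl; intro k _
      rw [← Finset.sum_subset (Finset.subset_univ (G k))]
      intro j _ hj
      rw [hsupph k j hj, hsupp k j hj]; ring
    rw [step1, Finset.mul_sum]
    apply Finset.sum_le_sum
    intro k _
    have cs := cs_aux (G k) A (fun j => νhat k j - ν k j)
    have ext : ∑ j ∈ G k, (νhat k j - ν k j) ^ 2 = ∑ j, (νhat k j - ν k j) ^ 2 := by
      apply Finset.sum_subset (Finset.subset_univ (G k))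
      intro j _ hj
      rw [hsupph k j hj, hsupp k j hj]; ring
    rw [ext] at cs
    have tri : Real.sqrt (∑ j, (νhat k j - ν k j) ^ 2) ≤ Nh k + Nv k :=
      sqrt_sub_le_aux _ _
    have hAn : Real.sqrt (∑ j ∈ G k, A j ^ 2) ≤ (n : ℝ) * lam k := by
      have hn' : (0 : ℝ) < n := by exact_mod_cast hn
      calc Real.sqrt (∑ j ∈ G k, A j ^ 2)
          = (n : ℝ) * ((1/n : ℝ) * Real.sqrt (∑ j ∈ G k, A j ^ 2)) := by
            field_simp
        _ ≤ (n : ℝ) * lam k := by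
            apply mul_le_mul_of_nonneg_left _ (le_of_lt hn')
            exact hnoise k
    calc ∑ j ∈ G k, A j * (νhat k j - ν k j)
        ≤ Real.sqrt (∑ j ∈ G k, A j ^ 2) *
            Real.sqrt (∑ j, (νhat k j - ν k j) ^ 2) := cs
      _ ≤ ((n:ℝ) * lam k) * (Nh k + Nv k) := by
          exact mul_le_mul hAn tri (Real.sqrt_nonneg _)
            (mul_nonneg (Nat.cast_nonneg n) (hlam k))
      _ = (n : ℝ) * (lam k * (Nh k + Nv k)) := by ring
  -- finish by arithmetic
  have hn' : (0 : ℝ) < n := by exact_mod_cast hn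
  have hinv : (0 : ℝ) < 1 / n := by positivity
  have key' : (1 / n : ℝ) * (∑ j, A j * βhat j - ∑ j, A j * β j)
      ≤ ∑ k, lam k * (Nh k + Nv k) := by
    calc (1 / n : ℝ) * (∑ j, A j * βhat j - ∑ j, A j * β j)
        ≤ (1 / n : ℝ) * ((n : ℝ) * ∑ k, lam k * (Nh k + Nv k)) :=
          mul_le_mul_of_nonneg_left key (le_of_lt hinv)
      _ = ∑ k, lam k * (Nh k + Nv k) := by field_simp
  have expand2 : ∑ k, lam k * (Nh k + Nv k)
      = ∑ k, lam k * Nh k + ∑ k, lam k * Nv k := by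
    rw [← Finset.sum_add_distrib]
    apply Finset.sum_congr rfl; intro k _; ring
  rw [expand2] at key'
  have goal := final_arith (1 / n : ℝ)
    (∑ i, (f0 i - X.mulVec βhat i) ^ 2) (∑ i, (f0 i - X.mulVec β i) ^ 2)
    (∑ i, ε i * f0 i) (∑ i, ε i ^ 2)
    (∑ j, A j * βhat j) (∑ j, A j * β j)
    (∑ k, lam k * Nh k) (∑ k, lam k * Nv k) ?_ ?_
  · calc (1 / n : ℝ) * ∑ i, (f0 i - X.mulVec βhat i) ^ 2
        ≤ (1 / n : ℝ) * (∑ i, (f0 i - X.mulVec β i) ^ 2)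
            + 4 * ∑ k, lam k * Nv k := goal
      _ = _ := by simp only [hNv]
  · exact hopt'
  · exact key'
end
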